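/- arXiv:2207.14208 — 2 statements merged into one kernel-verified Lean document; each statement's English description precedes it below -/
import Mathlib

section
/- Fix θ ∈ [0,1) and define G(α, Δτ) = 1 − Δτ·G₀(α) where G₀(α) = (θ(θ−1)/2)e^{−2p(α)} + θ(2−θ)e^{−p(α)} + ((1−θ)(2−θ)/2) and p(α) = arcosh(2 − cos α). Then Δτ_OPT = 2/(G₀(π/2) + G₀(π)) satisfies: for every Δτ > 0, max{|G(π/2, Δτ_OPT)|, |G(π, Δτ_OPT)|} ≤ max{|G(π/2, Δτ)|, |G(π, Δτ)|}. -/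
noncomputable def Real.arcoshLog (x : ℝ) : ℝ := Real.log (x + Real.sqrt (x ^ 2 - 1))

open Real

lemma arcosh_pos_of_two_le (y : ℝ) (hy : 2 ≤ y) : 0 < Real.arcoshLog y := by
  unfold Real.arcoshLog
  apply Real.log_pos
  have : (0:ℝ) ≤ Real.sqrt (y ^ 2 - 1) := Real.sqrt_nonneg _
  linarith

lemma G0_pos (θ x : ℝ) (hθ0 : 0 ≤ θ) (hθ1 : θ < 1) (hx0 : 0 < x) (hx1 : x < 1) :
    0 < (θ * (θ - 1) / 2) * x ^ 2 + θ * (2 - θ) * x + (1 - θ) * (2 - θ) / 2 := by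
  nlinarith [mul_nonneg (mul_nonneg hθ0 (sub_nonneg.mpr hθ1.le))
      (mul_nonneg hx0.le (sub_nonneg.mpr hx1.le)),
    mul_nonneg (mul_nonneg (sub_nonneg.mpr hx1.le) (sub_nonneg.mpr hθ1.le))
      (by linarith : (0:ℝ) ≤ 2 - θ)]

lemma minimax (a b s : ℝ) (ha : 0 < a) (hb : 0 < b) :
    max |1 - (2 / (a + b)) * a| |1 - (2 / (a + b)) * b| ≤ max |1 - s * a| |1 - s * b| := by
  have hab : 0 < a + b := by linarith
  set M := max |1 - s * a| |1 - s * b| with hM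
  have h1 : |1 - s * a| ≤ M := le_max_left _ _
  have h2 : |1 - s * b| ≤ M := le_max_right _ _
  have hMnn : 0 ≤ M := le_trans (abs_nonneg _) h1
  have key : |b - a| ≤ (a + b) * M := by
    have : b - a = b * (1 - s * a) - a * (1 - s * b) := by ring
    rw [this]
    calc |b * (1 - s * a) - a * (1 - s * b)|
        ≤ |b * (1 - s * a)| + |a * (1 - s * b)| := abs_sub _ _
      _ = b * |1 - s * a| + a * |1 - s * b| := by
          rw [abs_mul, abs_mul, abs_of_pos ha, abs_of_pos hb]
      _ ≤ b * M + a * M := by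
          gcongr
      _ = (a + b) * M := by ring
  have e1 : 1 - (2 / (a + b)) * a = (b - a) / (a + b) := by field_simp; ring
  have e2 : 1 - (2 / (a + b)) * b = (a - b) / (a + b) := by field_simp; ring
  have hv : |(b - a) / (a + b)| ≤ M := by
    rw [abs_div, abs_of_pos hab, div_le_iff₀ hab]
    linarith [key]
  have hv2 : |(a - b) / (a + b)| ≤ M := by
    rw [abs_div, abs_of_pos hab, div_le_iff₀ hab, abs_sub_comm]
    linarith [key]
  rw [e1, e2]
  exact max_le hv hv2

theorem dirichlet_dtau_opt (θ : ℝ) (hθ : θ ∈ Set.Ico (0 : ℝ) 1) :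
    let G₀ : ℝ → ℝ := fun α =>
      (θ * (θ - 1) / 2) * Real.exp (-(Real.arcoshLog (2 - Real.cos α))) ^ 2 +
      θ * (2 - θ) * Real.exp (-(Real.arcoshLog (2 - Real.cos α))) +
      (1 - θ) * (2 - θ) / 2
    let Δτopt : ℝ := 2 / (G₀ (π / 2) + G₀ π)
    ∀ Δτ > (0 : ℝ),
      max |1 - Δτopt * G₀ (π / 2)| |1 - Δτopt * G₀ π| ≤
      max |1 - Δτ * G₀ (π / 2)| |1 - Δτ * G₀ π| := by
  intro G₀ Δτopt Δτ hτ
  obtain ⟨hθ0, hθ1⟩ := hθ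
  have hx1 : ∀ y : ℝ, 2 ≤ y → Real.exp (-(Real.arcoshLog y)) < 1 := by
    intro y hy
    have := arcosh_pos_of_two_le y hy
    exact Real.exp_lt_one_iff.mpr (by linarith)
  have ha : 0 < G₀ (π / 2) := by
    have hc : Real.cos (π / 2) = 0 := Real.cos_pi_div_two
    simp only [G₀, hc]
    norm_num
    exact G0_pos θ _ hθ0 hθ1 (Real.exp_pos _) (hx1 2 (by norm_num))
  have hb : 0 < G₀ π := by
    have hc : Real.cos π = -1 := Real.cos_pi
    simp only [G₀, hc]
    norm_num
    exact G0_pos θ _ hθ0 hθ1 (Real.exp_pos _) (hx1 3 (by norm_num))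
  have := minimax (G₀ (π / 2)) (G₀ π) Δτ ha hb
  simpa [Δτopt] using this
end

section
/- For α ∈ (0, π), let p(α) = arcosh(2 − cos α), q = e^{−p(α)}. Define the Neumann coefficients c₋₂ = 1/2 − θ, c₋₁ = 2(θ − 1), c₀ = 3/2 − θ for θ ∈ [0,1). Then for θ ≠ 1/2, the equation q = c₋₁/(−2c₋₂) = 1 + 1/(1 − 2θ) has no solution with α ∈ (π/2, π); and for θ = 1/2, 2c₋₂q + c₋₁ = −1 ≠ 0. Consequently, G₀(α) = c₋₂q² + c₋₁q + c₀ has no stationary points as a function of α on (π/2, π). -/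
open Real

lemma neumann_x_gt_two {α : ℝ} (hα : α ∈ Set.Ioo (π / 2) π) : 2 < 2 - Real.cos α := by
  have h : Real.cos α < 0 := by
    apply Real.cos_neg_of_pi_div_two_lt_of_lt hα.1
    nlinarith [hα.2, Real.pi_pos]
  linarith

lemma neumann_q_bounds {α : ℝ} (hα : α ∈ Set.Ioo (π / 2) π) :
    0 < Real.exp (-(Real.arcoshLog (2 - Real.cos α))) ∧
    Real.exp (-(Real.arcoshLog (2 - Real.cos α))) < 1 := by
  refine ⟨Real.exp_pos _, ?_⟩
  have hx := neumann_x_gt_two hα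
  set x := 2 - Real.cos α
  have hs : 0 ≤ Real.sqrt (x ^ 2 - 1) := Real.sqrt_nonneg _
  have hu : 1 < x + Real.sqrt (x ^ 2 - 1) := by linarith
  have : 0 < Real.arcoshLog x := Real.log_pos hu
  calc Real.exp (-(Real.arcoshLog x)) < Real.exp 0 := Real.exp_lt_exp.2 (by linarith)
    _ = 1 := Real.exp_zero

lemma neumann_hasDerivAt {α : ℝ} (hα : α ∈ Set.Ioo (π / 2) π) :
    ∃ d : ℝ, d < 0 ∧
      HasDerivAt (fun a : ℝ => Real.exp (-(Real.arcoshLog (2 - Real.cos a)))) d α := by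
  have hx := neumann_x_gt_two hα
  have hsin : 0 < Real.sin α := Real.sin_pos_of_pos_of_lt_pi (by nlinarith [hα.1, Real.pi_pos]) hα.2
  set x := 2 - Real.cos α with hxdef
  have hx21 : 0 < x ^ 2 - 1 := by nlinarith
  have hs : 0 < Real.sqrt (x ^ 2 - 1) := Real.sqrt_pos.2 hx21
  have hu : 0 < x + Real.sqrt (x ^ 2 - 1) := by linarith
  have h1 : HasDerivAt (fun a : ℝ => 2 - Real.cos a) (Real.sin α) α := by
    simpa using (Real.hasDerivAt_cos α).const_sub 2
  have h2 : HasDerivAt (fun a : ℝ => (2 - Real.cos a) ^ 2 - 1) (2 * x * Real.sin α) α := by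
    have := (h1.pow 2).sub_const 1
    refine this.congr_deriv ?_
    push_cast
    ring
  have h3 : HasDerivAt (fun a : ℝ => Real.sqrt ((2 - Real.cos a) ^ 2 - 1))
      (2 * x * Real.sin α / (2 * Real.sqrt (x ^ 2 - 1))) α := h2.sqrt (by positivity)
  have h4 : HasDerivAt (fun a : ℝ => (2 - Real.cos a) + Real.sqrt ((2 - Real.cos a) ^ 2 - 1))
      (Real.sin α + 2 * x * Real.sin α / (2 * Real.sqrt (x ^ 2 - 1))) α := h1.add h3
  have hu' : 0 < Real.sin α + 2 * x * Real.sin α / (2 * Real.sqrt (x ^ 2 - 1)) := by positivity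
  have h5 : HasDerivAt (fun a : ℝ => Real.arcoshLog (2 - Real.cos a))
      ((Real.sin α + 2 * x * Real.sin α / (2 * Real.sqrt (x ^ 2 - 1))) /
        (x + Real.sqrt (x ^ 2 - 1))) α := h4.log (ne_of_gt hu)
  have h6 := (h5.neg).exp
  refine ⟨_, ?_, h6⟩
  have hp : 0 < (Real.sin α + 2 * x * Real.sin α / (2 * Real.sqrt (x ^ 2 - 1))) /
      (x + Real.sqrt (x ^ 2 - 1)) := div_pos hu' hu
  have he : 0 < Real.exp (-(Real.arcoshLog (2 - Real.cos α))) := Real.exp_pos _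
  exact mul_neg_of_pos_of_neg (Real.exp_pos _) (neg_neg_of_pos hp)

theorem neumann_no_stationary_points (θ : ℝ) (hθ : θ ∈ Set.Ico (0 : ℝ) 1) :
    (θ ≠ 1 / 2 → ∀ α ∈ Set.Ioo (π / 2) π,
      Real.exp (-(Real.arcoshLog (2 - Real.cos α))) ≠ 1 + 1 / (1 - 2 * θ)) ∧
    (θ = 1 / 2 → ∀ α : ℝ,
      2 * (1 / 2 - θ) * Real.exp (-(Real.arcoshLog (2 - Real.cos α))) + 2 * (θ - 1) = -1) ∧
    ∀ α ∈ Set.Ioo (π / 2) π,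
      deriv (fun a : ℝ =>
        (1 / 2 - θ) * Real.exp (-(Real.arcoshLog (2 - Real.cos a))) ^ 2 +
        2 * (θ - 1) * Real.exp (-(Real.arcoshLog (2 - Real.cos a))) +
        (3 / 2 - θ)) α ≠ 0 := by
  obtain ⟨hθ0, hθ1⟩ := hθ
  have key : ∀ α ∈ Set.Ioo (π / 2) π,
      2 * (1 / 2 - θ) * Real.exp (-(Real.arcoshLog (2 - Real.cos α))) + 2 * (θ - 1) ≠ 0 := by
    intro α hα h
    obtain ⟨hq0, hq1⟩ := neumann_q_bounds hα
    set q := Real.exp (-(Real.arcoshLog (2 - Real.cos α)))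
    rcases lt_trichotomy θ (1/2) with hc | hc | hc
    · nlinarith
    · nlinarith
    · nlinarith
  refine ⟨?_, ?_, ?_⟩
  · intro hne α hα heq
    apply key α hα
    obtain ⟨hq0, hq1⟩ := neumann_q_bounds hα
    rw [heq]
    have h2θ : 1 - 2 * θ ≠ 0 := by
      intro h; apply hne; linarith
    field_simp
    ring
  · intro h α
    rw [h]; ring
  · intro α hα
    obtain ⟨d, hd, hf⟩ := neumann_hasDerivAt hα
    set q := Real.exp (-(Real.arcoshLog (2 - Real.cos α))) with hq
    have hG : HasDerivAt (fun a : ℝ =>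
        (1 / 2 - θ) * Real.exp (-(Real.arcoshLog (2 - Real.cos a))) ^ 2 +
        2 * (θ - 1) * Real.exp (-(Real.arcoshLog (2 - Real.cos a))) +
        (3 / 2 - θ))
        (d * (2 * (1 / 2 - θ) * q + 2 * (θ - 1))) α := by
      have := (((hf.pow 2).const_mul (1 / 2 - θ)).add (hf.const_mul (2 * (θ - 1)))).add_const
        (3 / 2 - θ)
      refine this.congr_deriv ?_
      push_cast
      ring
    rw [hG.deriv]
    exact mul_ne_zero (ne_of_lt hd) (key α hα)
end
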